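/- Let d, N be natural numbers with 1 ≤ N ≤ d−1, let w₁ ∈ [0,1] and w₂ ≥ w₃ ≥ 0 be real numbers, and let v ∈ ℝ^d be the vector whose first N−1 entries equal w₂+w₃, whose N-th entry is w₂, whose (N+1)-st entry is w₃, and whose remaining entries are 0. Let A be a d×d complex Hermitian matrix and let B be a d×d complex Hermitian positive semidefinite matrix whose eigenvalue vector is majorized by v, i.e., trace B = (N−1)(w₂+w₃) + w₂ + w₃ and for every k with 1 ≤ k ≤ d the sum of the k largest eigenvalues of B is at most the sum of the k largest entries of v. Then the sum of the N largest eigenvalues of w₁·A + B is at most w₁·(sum of the N largest eigenvalues of A) + (N−1)(w₂+w₃) + w₂. -/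

import Mathlib

open scoped ComplexOrder

/-- The sum of the `k` largest entries of `x : Fin d → ℝ`: the supremum over all
`k`-element index sets of the sum of the corresponding entries. -/
noncomputable def sumKLargest {d : ℕ} (k : ℕ) (x : Fin d → ℝ) : ℝ :=
  sSup { y : ℝ | ∃ s : Finset (Fin d), s.card = k ∧ y = ∑ i ∈ s, x i }

lemma sumKLargest_set_eq {d k : ℕ} (x : Fin d → ℝ) :
    { y : ℝ | ∃ s : Finset (Fin d), s.card = k ∧ y = ∑ i ∈ s, x i } =
      ↑((Finset.univ.powersetCard k).image (fun s => ∑ i ∈ s, x i)) := by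
  ext y
  simp only [Set.mem_setOf_eq, Finset.coe_image, Set.mem_image, Finset.mem_coe,
    Finset.mem_powersetCard]
  constructor
  · rintro ⟨s, hs, rfl⟩; exact ⟨s, ⟨s.subset_univ, hs⟩, rfl⟩
  · rintro ⟨s, ⟨-, hs⟩, rfl⟩; exact ⟨s, hs, rfl⟩

lemma le_sumKLargest {d k : ℕ} (x : Fin d → ℝ) (s : Finset (Fin d)) (hs : s.card = k) :
    ∑ i ∈ s, x i ≤ sumKLargest k x := by
  apply le_csSup
  · rw [sumKLargest_set_eq]; exact (Finset.finite_toSet _).bddAbove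
  · exact ⟨s, hs, rfl⟩

lemma sumKLargest_le {d k : ℕ} (hkd : k ≤ d) (x : Fin d → ℝ) {c : ℝ}
    (h : ∀ s : Finset (Fin d), s.card = k → ∑ i ∈ s, x i ≤ c) :
    sumKLargest k x ≤ c := by
  obtain ⟨s, -, hs⟩ := Finset.exists_subset_card_eq (s := (Finset.univ : Finset (Fin d))) (n := k)
    (by simpa using hkd)
  exact csSup_le ⟨_, s, hs, rfl⟩ (by rintro y ⟨t, ht, rfl⟩; exact h t ht)

lemma knapsack {d k : ℕ} (hk1 : 1 ≤ k) (hkd : k ≤ d) (lam t : Fin d → ℝ)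
    (ht0 : ∀ i, 0 ≤ t i) (ht1 : ∀ i, t i ≤ 1) (hts : ∑ i, t i = k) :
    ∑ i, lam i * t i ≤ sumKLargest k lam := by
  -- maximizing set
  obtain ⟨s₀, -, hs₀⟩ := Finset.exists_subset_card_eq (s := (Finset.univ : Finset (Fin d))) (n := k)
    (by simpa using hkd)
  have hne : (Finset.univ.powersetCard k : Finset (Finset (Fin d))).Nonempty :=
    ⟨s₀, by simp [Finset.mem_powersetCard, hs₀]⟩
  obtain ⟨s, hsmem, hsmax⟩ := Finset.exists_max_image _ (fun s => ∑ i ∈ s, lam i) hne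
  rw [Finset.mem_powersetCard] at hsmem
  obtain ⟨-, hcard⟩ := hsmem
  have hsne : s.Nonempty := Finset.card_pos.mp (by omega)
  obtain ⟨i₀, hi₀s, hi₀min⟩ := Finset.exists_min_image s lam hsne
  set c := lam i₀ with hc
  -- outside s, lam ≤ c
  have hout : ∀ j, j ∉ s → lam j ≤ c := by
    intro j hj
    by_contra hlt
    push_neg at hlt
    have hmem' : insert j (s.erase i₀) ∈ Finset.univ.powersetCard k := by
      rw [Finset.mem_powersetCard]
      refine ⟨Finset.subset_univ _, ?_⟩
      rw [Finset.card_insert_of_notMem (fun h => hj (Finset.mem_of_mem_erase h)),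
        Finset.card_erase_of_mem hi₀s]
      omega
    have := hsmax _ hmem'
    rw [Finset.sum_insert (fun h => hj (Finset.mem_of_mem_erase h)),
      ← Finset.add_sum_erase s lam hi₀s] at this
    linarith
  have h1 : ∑ i ∈ s, lam i * t i ≤ ∑ i ∈ s, (c * t i - c + lam i) := by
    refine Finset.sum_le_sum fun i hi => ?_
    nlinarith [hi₀min i hi, ht1 i]
  have h2 : ∑ i ∈ sᶜ, lam i * t i ≤ ∑ i ∈ sᶜ, c * t i := by
    refine Finset.sum_le_sum fun i hi => ?_
    have := hout i (by simpa using hi)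
    nlinarith [ht0 i]
  have hsplit : ∑ i ∈ s, t i + ∑ i ∈ sᶜ, t i = (k : ℝ) := by
    rw [Finset.sum_add_sum_compl]; exact hts
  have hsplit2 : ∑ i, lam i * t i = ∑ i ∈ s, lam i * t i + ∑ i ∈ sᶜ, lam i * t i :=
    (Finset.sum_add_sum_compl s _).symm
  have e1 : ∑ i ∈ s, (c * t i - c + lam i)
      = c * ∑ i ∈ s, t i - k * c + ∑ i ∈ s, lam i := by
    rw [Finset.sum_add_distrib, Finset.sum_sub_distrib, ← Finset.mul_sum,
      Finset.sum_const, hcard]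
    ring
  have e2 : ∑ i ∈ sᶜ, c * t i = c * ∑ i ∈ sᶜ, t i := by rw [Finset.mul_sum]
  have hle := le_sumKLargest lam s hcard
  rw [hsplit2]
  rw [e1] at h1
  rw [e2] at h2
  have : c * ∑ i ∈ s, t i + c * ∑ i ∈ sᶜ, t i = c * k := by rw [← mul_add, hsplit]
  linarith

open Matrix in
lemma core {d : ℕ} (U A : Matrix (Fin d) (Fin d) ℂ)
    (hU : U ∈ Matrix.unitaryGroup (Fin d) ℂ) (hA : A.IsHermitian)
    (s : Finset (Fin d)) (hs1 : 1 ≤ s.card) :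
    (Matrix.trace (Matrix.diagonal (fun i => if i ∈ s then (1:ℂ) else 0)
      * (star U * A * U))).re ≤ sumKLargest s.card hA.eigenvalues := by
  classical
  set V : Matrix (Fin d) (Fin d) ℂ := ↑hA.eigenvectorUnitary with hV
  set W : Matrix (Fin d) (Fin d) ℂ := star V * U with hWdef
  have hVmem : V ∈ Matrix.unitaryGroup (Fin d) ℂ := hA.eigenvectorUnitary.2
  have hUU : U * star U = 1 := (Matrix.mem_unitaryGroup_iff).mp hU
  have hUU' : star U * U = 1 := (Matrix.mem_unitaryGroup_iff').mp hU
  have hVV : V * star V = 1 := (Matrix.mem_unitaryGroup_iff).mp hVmem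
  have hVV' : star V * V = 1 := (Matrix.mem_unitaryGroup_iff').mp hVmem
  have hWW : W * star W = 1 := by
    rw [hWdef, StarMul.star_mul, star_star]
    calc star V * U * (star U * V) = star V * (U * star U) * V := by
          simp only [Matrix.mul_assoc]
        _ = 1 := by rw [hUU, Matrix.mul_one, hVV']
  have hWW' : star W * W = 1 := by
    rw [hWdef, StarMul.star_mul, star_star]
    calc star U * V * (star V * U) = star U * (V * star V) * U := by
          simp only [Matrix.mul_assoc]
        _ = 1 := by rw [hVV, Matrix.mul_one, hUU']
  set lam : Fin d → ℝ := hA.eigenvalues with hlam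
  -- rewrite A
  have hAspec : star U * A * U = star W * Matrix.diagonal (fun i => (lam i : ℂ)) * W := by
    have := hA.spectral_theorem
    rw [hWdef, StarMul.star_mul, star_star]
    calc star U * A * U
        = star U * (V * Matrix.diagonal (fun i => (lam i : ℂ)) * star V) * U := by
          rw [this]; rfl
      _ = star U * V * Matrix.diagonal (fun i => (lam i : ℂ)) * (star V * U) := by
          simp only [Matrix.mul_assoc]
  set t : Fin d → ℝ := fun i => ∑ j ∈ s, Complex.normSq (W i j) with ht
  have hrow : ∀ i, ∑ j, Complex.normSq (W i j) = 1 := by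
    intro i
    have h1 : (W * star W) i i = 1 := by rw [hWW]; simp
    rw [Matrix.mul_apply] at h1
    have h2 := congrArg Complex.re h1
    simpa [Matrix.star_apply, Complex.mul_conj] using h2
  have hcol : ∀ j, ∑ i, Complex.normSq (W i j) = 1 := by
    intro j
    have h1 : (star W * W) j j = 1 := by rw [hWW']; simp
    rw [Matrix.mul_apply] at h1
    have h2 := congrArg Complex.re h1
    simpa [Matrix.star_apply, Complex.normSq_eq_conj_mul_self, Complex.normSq_apply] using h2
  have ht0 : ∀ i, 0 ≤ t i := fun i => Finset.sum_nonneg fun j _ => Complex.normSq_nonneg _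
  have ht1 : ∀ i, t i ≤ 1 := by
    intro i
    rw [← hrow i]
    exact Finset.sum_le_sum_of_subset_of_nonneg (Finset.subset_univ s)
      (fun j _ _ => Complex.normSq_nonneg _)
  have hts : ∑ i, t i = (s.card : ℝ) := by
    rw [ht]
    rw [Finset.sum_comm]
    simp [hcol]
  have htrace : (Matrix.trace (Matrix.diagonal (fun i => if i ∈ s then (1:ℂ) else 0)
      * (star U * A * U))).re = ∑ i, lam i * t i := by
    rw [hAspec]
    rw [Matrix.trace]
    have hdiag : ∀ j, (Matrix.diagonal (fun i => if i ∈ s then (1:ℂ) else 0)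
        * (star W * Matrix.diagonal (fun i => (lam i : ℂ)) * W)).diag j
        = (if j ∈ s then (1:ℂ) else 0)
          * (star W * Matrix.diagonal (fun i => (lam i : ℂ)) * W) j j := by
      intro j
      simp [Matrix.diag, Matrix.diagonal_mul]
    rw [Finset.sum_congr rfl fun j _ => hdiag j]
    have hentry : ∀ j, (star W * Matrix.diagonal (fun i => (lam i : ℂ)) * W) j j
        = ∑ i, ((lam i : ℂ) * (Complex.normSq (W i j) : ℂ)) := by
      intro j
      rw [Matrix.mul_apply]
      refine Finset.sum_congr rfl fun i _ => ?_
      rw [Matrix.mul_apply]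
      rw [Finset.sum_mul]
      rw [Finset.sum_eq_single i]
      · simp only [Matrix.star_apply, Matrix.diagonal_apply_eq]
        rw [Complex.normSq_eq_conj_mul_self]
        rw [Complex.star_def]
        ring
      · intro b _ hb
        simp [Matrix.diagonal_apply_ne _ hb]
      · simp
    rw [Finset.sum_congr rfl fun j _ => by rw [hentry j]]
    simp only [ite_mul, one_mul, zero_mul]
    rw [Finset.sum_ite_mem, Finset.univ_inter, Finset.sum_comm, Complex.re_sum]
    refine Finset.sum_congr rfl fun i _ => ?_
    have h3 : ∑ j ∈ s, ((lam i : ℂ) * (Complex.normSq (W i j) : ℂ)) = ((lam i * t i : ℝ) : ℂ) := by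
      rw [ht, Finset.mul_sum]
      push_cast
      rfl
    rw [h3, Complex.ofReal_re]
  rw [htrace]
  exact knapsack hs1 (by simpa using (Finset.card_le_univ s)) lam t ht0 ht1 hts

/-- upper bound on the sum of the `N` largest eigenvalues of `w₁·A + B`,
where `B` is positive semidefinite with eigenvalue vector majorized by
`v = (w₂+w₃, …, w₂+w₃, w₂, w₃, 0, …)` (with `N−1` leading entries `w₂+w₃`). -/
theorem sum_N_largest_eigenvalues_r3_upper_bound
    (d N : ℕ) (hN : 1 ≤ N) (hNd : N ≤ d - 1)
    (w₁ w₂ w₃ : ℝ) (hw₁ : w₁ ∈ Set.Icc (0 : ℝ) 1) (hw₂₃ : w₂ ≥ w₃) (hw₃ : w₃ ≥ 0)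
    (v : Fin d → ℝ)
    (hv : ∀ i : Fin d, v i =
      if (i : ℕ) < N - 1 then w₂ + w₃
      else if (i : ℕ) = N - 1 then w₂
      else if (i : ℕ) = N then w₃
      else 0)
    (A B : Matrix (Fin d) (Fin d) ℂ) (hA : A.IsHermitian) (hB : B.PosSemidef)
    (htrB : B.trace = ((((N : ℝ) - 1) * (w₂ + w₃) + w₂ + w₃ : ℝ) : ℂ))
    (hmaj : ∀ k : ℕ, 1 ≤ k → k ≤ d →
      sumKLargest k hB.isHermitian.eigenvalues ≤ sumKLargest k v)
    (hγ : (w₁ • A + B).IsHermitian) :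
    sumKLargest N hγ.eigenvalues ≤
      w₁ * sumKLargest N hA.eigenvalues + ((N : ℝ) - 1) * (w₂ + w₃) + w₂ := by
  classical
  have hd : N ≤ d := by omega
  have hw₂ : 0 ≤ w₂ := le_trans hw₃ hw₂₃
  -- Step 1: bound sumKLargest N v
  have hvT : sumKLargest N v ≤ ((N : ℝ) - 1) * (w₂ + w₃) + w₂ := by
    apply sumKLargest_le hd
    intro s hs
    -- find an index in s with ¬ (i < N - 1)
    have hex : ∃ i₀ ∈ s, ¬ ((i₀ : ℕ) < N - 1) := by
      by_contra hcon
      push_neg at hcon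
      have : s.card ≤ N - 1 := by
        have := Finset.card_le_card_of_injOn (fun i : Fin d => (i : ℕ))
          (fun a ha => Finset.mem_range.mpr (hcon a ha))
          (fun a _ b _ h => Fin.val_injective h)
        simpa using this
      omega
    obtain ⟨i₀, hi₀s, hi₀⟩ := hex
    rw [← Finset.add_sum_erase s v hi₀s]
    have hvi₀ : v i₀ ≤ w₂ := by
      rw [hv i₀]
      rw [if_neg hi₀]
      split_ifs <;> linarith
    have hrest : ∑ i ∈ s.erase i₀, v i ≤ ((N : ℝ) - 1) * (w₂ + w₃) := by
      have hbd : ∀ i ∈ s.erase i₀, v i ≤ w₂ + w₃ := by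
        intro i _
        rw [hv i]
        split_ifs <;> linarith
      calc ∑ i ∈ s.erase i₀, v i ≤ (s.erase i₀).card • (w₂ + w₃) :=
            Finset.sum_le_card_nsmul _ _ _ hbd
        _ = ((N : ℝ) - 1) * (w₂ + w₃) := by
            rw [Finset.card_erase_of_mem hi₀s, hs, nsmul_eq_mul]
            congr 1
            push_cast [Nat.cast_sub hN]
            ring
    linarith
  -- Step 2: Ky Fan type bound
  have hkf : sumKLargest N hγ.eigenvalues ≤
      w₁ * sumKLargest N hA.eigenvalues + sumKLargest N hB.isHermitian.eigenvalues := by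
    apply sumKLargest_le hd
    intro s hs
    set U : Matrix (Fin d) (Fin d) ℂ := ↑hγ.eigenvectorUnitary with hU
    set D : Matrix (Fin d) (Fin d) ℂ :=
      Matrix.diagonal (fun i => if i ∈ s then (1:ℂ) else 0) with hD
    have e1 : (Matrix.trace (D * (star U * (w₁ • A + B) * U))).re
        = ∑ j ∈ s, hγ.eigenvalues j := by
      rw [(show star U * (w₁ • A + B) * U = Matrix.diagonal (RCLike.ofReal ∘ hγ.eigenvalues) by
          have h := hγ.conjStarAlgAut_star_eigenvectorUnitary
          simpa [Unitary.conjStarAlgAut_apply] using h), Matrix.diagonal_mul_diagonal,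
        Matrix.trace_diagonal]
      rw [Complex.re_sum]
      simp only [ite_mul, one_mul, zero_mul, Function.comp_apply, apply_ite Complex.re,
        Complex.zero_re]
      rw [Finset.sum_ite_mem, Finset.univ_inter]
      refine Finset.sum_congr rfl fun j _ => ?_
      norm_cast
    have lin : star U * (w₁ • A + B) * U
        = w₁ • (star U * A * U) + star U * B * U := by
      rw [Matrix.mul_add, Matrix.add_mul, Matrix.mul_smul, Matrix.smul_mul]
    have e2 : (Matrix.trace (D * (star U * (w₁ • A + B) * U))).re
        = w₁ * (Matrix.trace (D * (star U * A * U))).re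
          + (Matrix.trace (D * (star U * B * U))).re := by
      rw [lin, Matrix.mul_add, Matrix.mul_smul, Matrix.trace_add, Matrix.trace_smul]
      simp [Complex.real_smul, Complex.add_re, Complex.mul_re]
    have hs1 : 1 ≤ s.card := by omega
    have c1 := core U A hγ.eigenvectorUnitary.2 hA s hs1
    have c2 := core U B hγ.eigenvectorUnitary.2 hB.isHermitian s hs1
    rw [hs] at c1 c2
    rw [← e1, e2]
    have := hw₁.1
    nlinarith [c1, c2]
  have := hmaj N hN hd
  linarith
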